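/- Let K be even, K_B ≤ K/2, T0 > 0, f_d ∈ ℝ. Given φ̃ ∈ ℝ^{K/2} and a perturbation δ ∈ ℝ^{K_B} with |δ_k| ≤ 1/2 for all k applied to the last K_B entries of φ̃, the change in envelope satisfies | E(φ̃, f_d) - E(φ̃ + δ̂, f_d) | ≤ (2/K) · Σ_{k} |1 - e^{i 2π δ_k T0 f_d}| ≤ (2/K) · Σ_k 2π |δ_k T0 f_d| ≤ (π K_B / (K/2)) · |T0 f_d|, where δ̂ is δ extended by zeros and E(ψ, f_d) = |(2/K) Σ_{k=0}^{K/2-1} e^{i2π ψ_k T0 f_d}|. -/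

import Mathlib

open Complex Real

noncomputable def Env (K : ℕ) (T0 fd : ℝ) (ψ : ℕ → ℝ) : ℝ :=
  ‖(2 / (K : ℂ)) * ∑ k ∈ Finset.range (K / 2),
    Complex.exp (2 * π * (ψ k) * T0 * fd * Complex.I)‖

lemma key_abs (x : ℝ) : ‖1 - Complex.exp (x * Complex.I)‖ ≤ |x| := by
  have hre : (1 - Complex.exp (x * Complex.I)).re = 1 - Real.cos x := by
    simp [Complex.exp_ofReal_mul_I_re]
  have him : (1 - Complex.exp (x * Complex.I)).im = -Real.sin x := by
    simp [Complex.exp_ofReal_mul_I_im]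
  have hsq : (‖1 - Complex.exp (x * Complex.I)‖)^2 = 2 - 2 * Real.cos x := by
    rw [Complex.sq_norm, Complex.normSq_apply, hre, him]
    nlinarith [Real.sin_sq_add_cos_sq x]
  have hcos : 1 - x^2/2 ≤ Real.cos x := Real.one_sub_sq_div_two_le_cos
  have h1 : (‖1 - Complex.exp (x * Complex.I)‖)^2 ≤ x^2 := by
    rw [hsq]; nlinarith
  nlinarith [norm_nonneg (1 - Complex.exp (x * Complex.I)), abs_nonneg x, _root_.sq_abs x]

theorem stmt9 (K KB : ℕ) (hK : 0 < K) (hKeven : Even K) (hKB : KB ≤ K / 2)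
    (T0 fd : ℝ) (hT0 : 0 < T0)
    (φt δ : ℕ → ℝ)
    (hδ0 : ∀ k < K / 2 - KB, δ k = 0)
    (hδ : ∀ k, |δ k| ≤ 1 / 2) :
    |Env K T0 fd φt - Env K T0 fd (fun k => φt k + δ k)| ≤
        (2 / K) * ∑ k ∈ Finset.range (K / 2),
          ‖1 - Complex.exp (2 * π * δ k * T0 * fd * Complex.I)‖ ∧
    (2 / K) * ∑ k ∈ Finset.range (K / 2),
        ‖1 - Complex.exp (2 * π * δ k * T0 * fd * Complex.I)‖ ≤
      (2 / K) * ∑ k ∈ Finset.range (K / 2), 2 * π * |δ k * T0 * fd| ∧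
    (2 / K) * ∑ k ∈ Finset.range (K / 2), 2 * π * |δ k * T0 * fd| ≤
      (π * KB / (K / 2 : ℝ)) * |T0 * fd| := by
  have hKpos : (0:ℝ) < K := by exact_mod_cast hK
  have h2K : (0:ℝ) ≤ 2 / K := by positivity
  refine ⟨?_, ?_, ?_⟩
  · -- first inequality
    have habs : |Env K T0 fd φt - Env K T0 fd (fun k => φt k + δ k)| ≤
        ‖(2 / (K:ℂ)) * ∑ k ∈ Finset.range (K / 2),
          (Complex.exp (2 * π * (φt k) * T0 * fd * Complex.I)
            - Complex.exp (2 * π * (φt k + δ k) * T0 * fd * Complex.I))‖ := by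
      unfold Env
      calc |‖_‖ - ‖_‖| ≤ ‖_ - _‖ := abs_norm_sub_norm_le _ _
        _ = _ := by
              rw [← mul_sub, ← Finset.sum_sub_distrib]
              congr 2
              apply Finset.sum_congr rfl
              intro k _
              congr 2 <;> push_cast <;> ring
    refine habs.trans ?_
    rw [norm_mul]
    have h2c : ‖(2 / (K:ℂ))‖ = 2 / K := by
      rw [norm_div, Complex.norm_ofNat, Complex.norm_natCast]
    rw [h2c]
    gcongr
    refine (norm_sum_le _ _).trans ?_
    apply Finset.sum_le_sum
    intro k _
    have : Complex.exp (2 * π * (φt k) * T0 * fd * Complex.I)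
        - Complex.exp (2 * π * (φt k + δ k) * T0 * fd * Complex.I)
        = Complex.exp (2 * π * (φt k) * T0 * fd * Complex.I) *
          (1 - Complex.exp (2 * π * δ k * T0 * fd * Complex.I)) := by
      rw [mul_sub, mul_one, ← Complex.exp_add]
      push_cast
      ring_nf
    rw [this, norm_mul]
    have hunit : ‖Complex.exp (2 * π * (φt k) * T0 * fd * Complex.I)‖ = 1 := by
      have : (2 * (π:ℂ) * (φt k) * T0 * fd) = ((2 * π * φt k * T0 * fd : ℝ) : ℂ) := by push_cast; ring
      rw [this, Complex.norm_exp_ofReal_mul_I]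
    rw [hunit, one_mul]
  · -- second inequality
    gcongr with k hk
    have hc : (2 * (π:ℂ) * δ k * T0 * fd) = ((2 * π * δ k * T0 * fd : ℝ) : ℂ) := by
      push_cast; ring
    calc ‖1 - Complex.exp (2 * π * δ k * T0 * fd * Complex.I)‖
        ≤ |2 * π * δ k * T0 * fd| := by rw [hc]; exact key_abs _
      _ = 2 * π * |δ k * T0 * fd| := by
          rw [show (2 * π * δ k * T0 * fd) = 2 * π * (δ k * T0 * fd) by ring,
            abs_mul, _root_.abs_of_nonneg (by positivity : (0:ℝ) ≤ 2 * π)]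
  · -- third inequality
    have hbound : ∑ k ∈ Finset.range (K / 2), 2 * π * |δ k * T0 * fd| ≤
        (KB : ℝ) * (π * |T0 * fd|) := by
      have hsplit : ∀ k ∈ Finset.range (K / 2), 2 * π * |δ k * T0 * fd| ≤
          (if k < K / 2 - KB then 0 else π * |T0 * fd|) := by
        intro k _
        by_cases h : k < K / 2 - KB
        · simp [h, hδ0 k h]
        · simp only [h, if_false]
          have : |δ k * T0 * fd| ≤ (1/2) * |T0 * fd| := by
            rw [mul_assoc, abs_mul]
            exact mul_le_mul_of_nonneg_right (hδ k) (abs_nonneg _)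
          nlinarith [Real.pi_pos]
      calc ∑ k ∈ Finset.range (K / 2), 2 * π * |δ k * T0 * fd|
          ≤ ∑ k ∈ Finset.range (K / 2), (if k < K / 2 - KB then 0 else π * |T0 * fd|) :=
            Finset.sum_le_sum hsplit
        _ = ((K / 2 - (K / 2 - KB) : ℕ) : ℝ) * (π * |T0 * fd|) := by
            rw [Finset.sum_ite, Finset.sum_const_zero, zero_add, Finset.sum_const]
            rw [nsmul_eq_mul]
            congr 2
            rw [Finset.filter_not, Finset.card_sdiff_of_subset (Finset.filter_subset _ _), Finset.card_range]
            congr 1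
            have : Finset.filter (fun k => k < K / 2 - KB) (Finset.range (K / 2)) =
                Finset.range (K / 2 - KB) := by
              ext k; simp; omega
            rw [this, Finset.card_range]
        _ = (KB : ℝ) * (π * |T0 * fd|) := by
            congr 2
            omega
    have hK2 : ((K : ℝ) / 2) = ((K / 2 : ℕ) : ℝ) := by
      obtain ⟨m, hm⟩ := hKeven
      have h2 : K / 2 = m := by omega
      rw [h2, hm]; push_cast; ring
    calc (2 / K) * ∑ k ∈ Finset.range (K / 2), 2 * π * |δ k * T0 * fd|
        ≤ (2 / K) * ((KB : ℝ) * (π * |T0 * fd|)) := by gcongr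
      _ = (π * KB / ((K:ℝ) / 2)) * |T0 * fd| := by field_simp
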